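/- arXiv:2112.07585 — 5 statements merged into one kernel-verified Lean document; each statement's English description precedes it below -/
import Mathlib

section
/- The set V = { z = (z₁, z₂, z₃) ∈ ℂ³ : Im z₃ = |z₁|² − |z₂|² and ‖z‖ < 1 } satisfies the contracting disc hull condition at the origin. -/
open Metric Set Filter Topology

variable {E F : Type*} [NormedAddCommGroup E] [NormedSpace ℂ E]
  [NormedAddCommGroup F] [NormedSpace ℂ F]

/-- An analytic disc: continuous on the closed unit disc, holomorphic on the open unit disc. -/
def IsAnalyticDisc (φ : ℂ → E) : Prop :=
  ContinuousOn φ (closedBall (0 : ℂ) 1) ∧ DifferentiableOn ℂ φ (ball (0 : ℂ) 1)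

/-- The contracting disc hull of `K`: points `z` such that for every `ε > 0` there is a
continuous family of analytic discs whose boundaries stay in the open `ε`-neighborhood of `K`,
with the time-1 disc passing through `z` at its center and the time-0 disc entirely contained
in the `ε`-neighborhood of `K`. -/
def contractingDiscHull (K : Set E) : Set E :=
  { z | ∀ ε > 0, ∃ φ : ℝ → ℂ → E,
      ContinuousOn (fun q : ℝ × ℂ => φ q.1 q.2) (Icc (0:ℝ) 1 ×ˢ closedBall (0 : ℂ) 1) ∧
      (∀ t ∈ Icc (0:ℝ) 1, IsAnalyticDisc (φ t)) ∧
      (∀ t ∈ Icc (0:ℝ) 1, φ t '' sphere (0 : ℂ) 1 ⊆ thickening ε K) ∧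
      φ 1 0 = z ∧
      φ 0 '' closedBall (0 : ℂ) 1 ⊆ thickening ε K }

/-- `V` satisfies the contracting disc hull condition at `p`: for every compact subset `K ⊆ V`
that is a neighborhood of `p` in the subspace topology of `V`, the point `p` lies in the
interior (in the ambient space) of the contracting disc hull of `K`. -/
def CDHConditionAt (V : Set E) (p : E) : Prop :=
  ∀ K : Set E, K ⊆ V → IsCompact K → K ∈ 𝓝[V] p →
    p ∈ interior (contractingDiscHull K)

/-- `f ∈ 𝒪(S)`: `f` agrees on `S` with a map holomorphic on some open neighborhood of `S`. -/
def MemO (f : E → F) (S : Set E) : Prop :=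
  ∃ U : Set E, IsOpen U ∧ S ⊆ U ∧
    ∃ g : E → F, DifferentiableOn ℂ g U ∧ EqOn f g S

/-- The tangent cone of `V` at `p`: limits of sequences `r j • (q j - p)` with `r j > 0`,
`q j ∈ V`. -/
def tangentConeOf (V : Set E) (p : E) : Set E :=
  { v | ∃ (r : ℕ → ℝ) (q : ℕ → E), (∀ j, 0 < r j) ∧ (∀ j, q j ∈ V) ∧
      Tendsto (fun j => r j • (q j - p)) atTop (𝓝 v) }

/-- `V` is locally closed: every point of `V` has an open neighborhood `U` such that
`V ∩ U` is closed in `U`. -/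
def IsLocallyClosedSet (V : Set E) : Prop :=
  ∀ p ∈ V, ∃ U : Set E, IsOpen U ∧ p ∈ U ∧ ∃ C : Set E, IsClosed C ∧ V ∩ U = C ∩ U

/-- A set is circular if it is invariant under multiplication by `e^{iθ}`. -/
def IsCircular (S : Set E) : Prop :=
  ∀ p ∈ S, ∀ θ : ℝ, Complex.exp (θ * Complex.I) • p ∈ S

/-- `φ` is a global semiflow of the holomorphic vector field `Z` on the open set `U`. -/
def IsGlobalSemiflow (U : Set E) (Z : E → E) (φ : ℝ → E → E) : Prop :=
  ContinuousOn (fun q : ℝ × E => φ q.1 q.2) (Ici (0:ℝ) ×ˢ U) ∧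
  (∀ z ∈ U, φ 0 z = z) ∧
  (∀ t ∈ Ici (0:ℝ), ∀ z ∈ U, φ t z ∈ U) ∧
  (∀ z ∈ U, ∀ t ∈ Ici (0:ℝ), HasDerivWithinAt (fun s => φ s z) (Z (φ t z)) (Ici (0:ℝ)) t)

noncomputable section CDHAux


local notation "E3" => EuclideanSpace ℂ (Fin 3)

def sQ (q : E3) : ℝ := (q 2).im - ‖q 0‖ ^ 2 + ‖q 1‖ ^ 2

def aQ (q : E3) : ℝ := Real.sqrt (max (sQ q) 0)
def bQ (q : E3) : ℝ := Real.sqrt (max (-sQ q) 0)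
def cQ (q : E3) : ℂ :=
  2 * ((starRingEnd ℂ) (q 0) * (aQ q : ℂ) - (starRingEnd ℂ) (q 1) * (bQ q : ℂ))

def wQ (q : E3) : E3 :=
  ((aQ q : ℂ)) • EuclideanSpace.single 0 (1:ℂ) + ((bQ q : ℂ)) • EuclideanSpace.single 1 (1:ℂ)
    + (Complex.I * cQ q) • EuclideanSpace.single 2 (1:ℂ)

lemma aQ_nonneg (q : E3) : 0 ≤ aQ q := Real.sqrt_nonneg _
lemma bQ_nonneg (q : E3) : 0 ≤ bQ q := Real.sqrt_nonneg _

lemma aQ_sq (q : E3) : aQ q ^ 2 = max (sQ q) 0 := Real.sq_sqrt (le_max_right _ _)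
lemma bQ_sq (q : E3) : bQ q ^ 2 = max (-sQ q) 0 := Real.sq_sqrt (le_max_right _ _)

lemma aQ_sq_sub_bQ_sq (q : E3) : aQ q ^ 2 - bQ q ^ 2 = sQ q := by
  rw [aQ_sq, bQ_sq]
  rcases le_total (sQ q) 0 with h | h
  · rw [max_eq_right h, max_eq_left (neg_nonneg.2 h)]; ring
  · rw [max_eq_left h, max_eq_right (neg_nonpos.2 h)]; ring

lemma wQ_apply_0 (q : E3) : wQ q 0 = (aQ q : ℂ) := by
  simp [wQ, EuclideanSpace.single_apply]
lemma wQ_apply_1 (q : E3) : wQ q 1 = (bQ q : ℂ) := by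
  simp [wQ, EuclideanSpace.single_apply]
lemma wQ_apply_2 (q : E3) : wQ q 2 = Complex.I * cQ q := by
  simp [wQ, EuclideanSpace.single_apply]

lemma continuous_apply_E3 (i : Fin 3) : Continuous (fun q : E3 => q i) :=
  (PiLp.proj (𝕜 := ℂ) (p := 2) (β := fun _ : Fin 3 => ℂ) i).continuous

lemma continuous_sQ : Continuous sQ := by
  unfold sQ
  exact ((Complex.continuous_im.comp (continuous_apply_E3 2)).sub
      ((continuous_norm.comp (continuous_apply_E3 0)).pow 2)).add
      ((continuous_norm.comp (continuous_apply_E3 1)).pow 2)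

lemma continuous_aQ : Continuous aQ :=
  Real.continuous_sqrt.comp ((continuous_sQ.max continuous_const))
lemma continuous_bQ : Continuous bQ :=
  Real.continuous_sqrt.comp ((continuous_sQ.neg.max continuous_const))

lemma continuous_cQ : Continuous cQ := by
  unfold cQ
  exact continuous_const.mul
    (((Complex.continuous_conj.comp (continuous_apply_E3 0)).mul
        (Complex.continuous_ofReal.comp continuous_aQ)).sub
      ((Complex.continuous_conj.comp (continuous_apply_E3 1)).mul
        (Complex.continuous_ofReal.comp continuous_bQ)))

lemma continuous_wQ : Continuous wQ := by
  unfold wQ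
  exact ((Complex.continuous_ofReal.comp continuous_aQ).smul continuous_const).add
      (((Complex.continuous_ofReal.comp continuous_bQ).smul continuous_const)) |>.add
      ((continuous_const.mul continuous_cQ).smul continuous_const)


lemma boundary_im (q : E3) (ζ : ℂ) (hζ : ‖ζ‖ = 1) :
    (q 2 + ζ * (Complex.I * cQ q)).im
      = ‖q 0 + ζ * (aQ q : ℂ)‖ ^ 2 - ‖q 1 + ζ * (bQ q : ℂ)‖ ^ 2 := by
  have hz : ζ.re ^ 2 + ζ.im ^ 2 = 1 := by
    have := Complex.sq_norm ζ
    rw [hζ] at this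
    simpa [Complex.normSq_apply, sq] using this.symm
  have hab := aQ_sq_sub_bQ_sq q
  unfold sQ at hab
  have h0 : ‖q 0‖ ^ 2 = (q 0).re ^ 2 + (q 0).im ^ 2 := by
    rw [Complex.sq_norm, Complex.normSq_apply]; ring
  have h1 : ‖q 1‖ ^ 2 = (q 1).re ^ 2 + (q 1).im ^ 2 := by
    rw [Complex.sq_norm, Complex.normSq_apply]; ring
  rw [h0, h1] at hab
  rw [Complex.sq_norm, Complex.sq_norm, Complex.normSq_apply, Complex.normSq_apply]
  simp only [cQ, Complex.add_re, Complex.add_im, Complex.mul_re, Complex.mul_im,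
    Complex.I_re, Complex.I_im, Complex.ofReal_re, Complex.ofReal_im, Complex.sub_re,
    Complex.sub_im, Complex.conj_re, Complex.conj_im, Complex.re_ofNat, Complex.im_ofNat]
  linear_combination (bQ q ^ 2 - aQ q ^ 2) * hz - hab


lemma coord_le_norm (q : E3) (i : Fin 3) : ‖q i‖ ≤ ‖q‖ := by
  rw [EuclideanSpace.norm_eq,
    ← Real.sqrt_sq (norm_nonneg (q i))]
  apply Real.sqrt_le_sqrt
  exact Finset.single_le_sum (f := fun j => ‖q j‖ ^ 2)
    (fun j _ => sq_nonneg _) (Finset.mem_univ i)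

lemma abs_sQ_le (q : E3) (hq1 : ‖q‖ ≤ 1) : |sQ q| ≤ 3 * ‖q‖ := by
  have h0 := coord_le_norm q 0
  have h1 := coord_le_norm q 1
  have h2 := coord_le_norm q 2
  have h2' : |(q 2).im| ≤ ‖q 2‖ := Complex.abs_im_le_norm _
  have ha0 := norm_nonneg (q 0)
  have ha1 := norm_nonneg (q 1)
  have hn := norm_nonneg q
  have e0 : ‖q 0‖ ^ 2 ≤ ‖q‖ := by nlinarith
  have e1 : ‖q 1‖ ^ 2 ≤ ‖q‖ := by nlinarith
  have e2 : |(q 2).im| ≤ ‖q‖ := le_trans h2' h2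
  rw [abs_le] at e2 ⊢
  have e0' : 0 ≤ ‖q 0‖ ^ 2 := sq_nonneg _
  have e1' : 0 ≤ ‖q 1‖ ^ 2 := sq_nonneg _
  constructor <;> unfold sQ <;> linarith [e2.1, e2.2]

lemma aQ_le (q : E3) (hq1 : ‖q‖ ≤ 1) : aQ q ≤ Real.sqrt (3 * ‖q‖) := by
  apply Real.sqrt_le_sqrt
  rcases max_cases (sQ q) 0 with ⟨h, _⟩ | ⟨h, _⟩
  · rw [h]; exact le_trans (le_abs_self _) (abs_sQ_le q hq1)
  · rw [h]; positivity

lemma bQ_le (q : E3) (hq1 : ‖q‖ ≤ 1) : bQ q ≤ Real.sqrt (3 * ‖q‖) := by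
  apply Real.sqrt_le_sqrt
  rcases max_cases (-sQ q) 0 with ⟨h, _⟩ | ⟨h, _⟩
  · rw [h]; exact le_trans (neg_le_abs _) (abs_sQ_le q hq1)
  · rw [h]; positivity

lemma norm_wQ_le (q : E3) (hq1 : ‖q‖ ≤ 1) : ‖wQ q‖ ≤ 6 * Real.sqrt (3 * ‖q‖) := by
  have ha := aQ_le q hq1
  have hb := bQ_le q hq1
  have ha0 := aQ_nonneg q
  have hb0 := bQ_nonneg q
  have hc : ‖cQ q‖ ≤ 2 * (aQ q + bQ q) := by
    unfold cQ
    calc ‖2 * ((starRingEnd ℂ) (q 0) * (aQ q : ℂ) - (starRingEnd ℂ) (q 1) * (bQ q : ℂ))‖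
        ≤ 2 * (‖(starRingEnd ℂ) (q 0) * (aQ q : ℂ)‖
            + ‖(starRingEnd ℂ) (q 1) * (bQ q : ℂ)‖) := by
          rw [norm_mul]
          simp only [RCLike.norm_ofNat]
          gcongr
          exact norm_sub_le _ _
      _ ≤ 2 * (aQ q + bQ q) := by
          rw [norm_mul, norm_mul, Complex.norm_conj, Complex.norm_conj,
            Complex.norm_of_nonneg ha0, Complex.norm_of_nonneg hb0]
          have h0 : ‖q 0‖ ≤ 1 := le_trans (coord_le_norm q 0) hq1
          have h1 : ‖q 1‖ ≤ 1 := le_trans (coord_le_norm q 1) hq1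
          have := norm_nonneg (q 0)
          have := norm_nonneg (q 1)
          nlinarith
  calc ‖wQ q‖ ≤ ‖((aQ q : ℂ)) • (EuclideanSpace.single 0 (1:ℂ) : E3)
        + ((bQ q : ℂ)) • (EuclideanSpace.single 1 (1:ℂ) : E3)‖
        + ‖(Complex.I * cQ q) • (EuclideanSpace.single 2 (1:ℂ) : E3)‖ := norm_add_le _ _
    _ ≤ (‖((aQ q : ℂ)) • (EuclideanSpace.single 0 (1:ℂ) : E3)‖
        + ‖((bQ q : ℂ)) • (EuclideanSpace.single 1 (1:ℂ) : E3)‖)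
        + ‖(Complex.I * cQ q) • (EuclideanSpace.single 2 (1:ℂ) : E3)‖ := by
          gcongr; exact norm_add_le _ _
    _ = aQ q + bQ q + ‖cQ q‖ := by
          simp [norm_smul, EuclideanSpace.norm_single,
            Complex.norm_real, abs_of_nonneg ha0, abs_of_nonneg hb0, norm_mul]
    _ ≤ (aQ q + bQ q) + 2 * (aQ q + bQ q) := by linarith
    _ = 3 * (aQ q + bQ q) := by ring
    _ ≤ 6 * Real.sqrt (3 * ‖q‖) := by linarith

lemma wQ_zero : wQ (0 : E3) = 0 := by
  have hs : sQ (0 : E3) = 0 := by simp [sQ]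
  have ha : aQ (0 : E3) = 0 := by simp [aQ, hs]
  have hb : bQ (0 : E3) = 0 := by simp [bQ, hs]
  have hc : cQ (0 : E3) = 0 := by simp [cQ, ha, hb]
  simp [wQ, ha, hb, hc]


lemma sqrt_bound {m r : ℝ} (hm0 : 0 < m) (hr : r = m ^ 2 / 1024) :
    6 * Real.sqrt (3 * r) ≤ m / 2 := by
  have h2 : 3 * r ≤ (m / 12) ^ 2 := by rw [hr]; nlinarith [sq_nonneg m]
  have h3 : Real.sqrt (3 * r) ≤ m / 12 := by
    rw [← Real.sqrt_sq (by positivity : (0:ℝ) ≤ m / 12)]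
    exact Real.sqrt_le_sqrt h2
  linarith

/-- the hypersurface `Im z₃ = |z₁|² − |z₂|²`, `‖z‖ < 1`, satisfies the
contracting disc hull condition at the origin. -/
theorem cdh_condition_hypersurface_C3 :
    CDHConditionAt
      {z : EuclideanSpace ℂ (Fin 3) |
        (z 2).im = ‖z 0‖ ^ 2 - ‖z 1‖ ^ 2 ∧ ‖z‖ < 1}
      (0 : EuclideanSpace ℂ (Fin 3)) := by
  intro K hKV hKc hKmem
  obtain ⟨U, hUo, hU0, hUK⟩ := mem_nhdsWithin.mp hKmem
  obtain ⟨δ, hδpos, hδ⟩ := Metric.isOpen_iff.mp hUo 0 hU0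
  set m : ℝ := min δ 1 with hmdef
  have hm0 : 0 < m := lt_min hδpos one_pos
  have hmδ : m ≤ δ := min_le_left _ _
  have hm1 : m ≤ 1 := min_le_right _ _
  set r : ℝ := m ^ 2 / 1024 with hrdef
  have hr0 : 0 < r := by positivity
  have hr1 : r ≤ 1 := by nlinarith
  have hrm : r < m / 2 := by nlinarith
  have hK0 : (0 : E3) ∈ K := by
    refine hUK ⟨hU0, ?_, ?_⟩
    · simp
    · simp
  have hball : ball (0 : E3) r ⊆ contractingDiscHull K := by
    intro p hp
    have hpr : ‖p‖ < r := by simpa [mem_ball, dist_zero_right] using hp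
    intro ε hε
    refine ⟨fun t ζ => ((t : ℝ) : ℂ) • p + ζ • wQ (((t : ℝ) : ℂ) • p), ?_, ?_, ?_, ?_, ?_⟩
    · have c1 : Continuous fun x : ℝ × ℂ => ((x.1 : ℝ) : ℂ) • p :=
        (Complex.continuous_ofReal.comp continuous_fst).smul continuous_const
      exact (c1.add (continuous_snd.smul (continuous_wQ.comp c1))).continuousOn
    · intro t _
      constructor
      · exact (continuous_const.add (continuous_id.smul continuous_const)).continuousOn
      · exact ((differentiable_id.smul_const _).const_add _).differentiableOn
    · rintro t ht x ⟨ζ, hζ, rfl⟩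
      have hζ1 : ‖ζ‖ = 1 := by simpa [mem_sphere, dist_zero_right] using hζ
      have hζa : ‖ζ‖ = 1 := hζ1
      set q : E3 := ((t : ℝ) : ℂ) • p with hq
      have hqn : ‖q‖ ≤ ‖p‖ := by
        rw [hq, norm_smul, Complex.norm_real]
        calc |t| * ‖p‖ ≤ 1 * ‖p‖ := by
              apply mul_le_mul_of_nonneg_right _ (norm_nonneg p)
              rw [abs_le]; exact ⟨le_trans (by norm_num) ht.1, ht.2⟩
          _ = ‖p‖ := one_mul _
      have hq1 : ‖q‖ ≤ 1 := le_trans hqn (le_trans hpr.le hr1)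
      have hnorm : ‖q + ζ • wQ q‖ < m := by
        have h3 : Real.sqrt (3 * ‖q‖) ≤ Real.sqrt (3 * r) :=
          Real.sqrt_le_sqrt (by nlinarith [lt_of_le_of_lt hqn hpr])
        have h4 := sqrt_bound hm0 hrdef
        have h5 : ‖q‖ < r := lt_of_le_of_lt hqn hpr
        calc ‖q + ζ • wQ q‖ ≤ ‖q‖ + ‖ζ • wQ q‖ := norm_add_le _ _
          _ = ‖q‖ + ‖wQ q‖ := by rw [norm_smul ζ (wQ q), hζ1, one_mul]
          _ ≤ ‖q‖ + 6 * Real.sqrt (3 * ‖q‖) := add_le_add_right (norm_wQ_le q hq1) _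
          _ < m := by linarith
      apply self_subset_thickening hε
      refine hUK ⟨hδ ?_, ?_, ?_⟩
      · rw [mem_ball, dist_zero_right]
        exact lt_of_lt_of_le hnorm hmδ
      · show ((q + ζ • wQ q) 2).im
            = ‖(q + ζ • wQ q) 0‖ ^ 2 - ‖(q + ζ • wQ q) 1‖ ^ 2
        have e2 : (q + ζ • wQ q) 2 = q 2 + ζ * (Complex.I * cQ q) := by
          simp [PiLp.add_apply, PiLp.smul_apply, smul_eq_mul, wQ_apply_2]
        have e0 : (q + ζ • wQ q) 0 = q 0 + ζ * (aQ q : ℂ) := by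
          simp [PiLp.add_apply, PiLp.smul_apply, smul_eq_mul, wQ_apply_0]
        have e1 : (q + ζ • wQ q) 1 = q 1 + ζ * (bQ q : ℂ) := by
          simp [PiLp.add_apply, PiLp.smul_apply, smul_eq_mul, wQ_apply_1]
        rw [e0, e1, e2]
        exact boundary_im q ζ hζa
      · exact lt_of_lt_of_le hnorm hm1
    · simp
    · rintro x ⟨ζ, hζ, rfl⟩
      show (((0 : ℝ) : ℂ)) • p + ζ • wQ ((((0 : ℝ) : ℂ)) • p) ∈ thickening ε K
      have : (((0 : ℝ) : ℂ)) • p + ζ • wQ ((((0 : ℝ) : ℂ)) • p) = (0 : E3) := by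
        simp [wQ_zero]
      rw [this]
      exact self_subset_thickening hε K hK0
  exact mem_interior.mpr ⟨ball 0 r, hball, isOpen_ball, mem_ball_self hr0⟩


end CDHAux
end

section
/- The set V = { z = (z₁, …, z₆) ∈ ℂ⁶ : Im z₁ = |z₂|² − |z₃|², Im z₄ = |z₅|² − |z₆|², and ‖z‖ < 1 } satisfies the contracting disc hull condition at the origin. -/
open Metric Set Filter Topology

variable {E F : Type*} [NormedAddCommGroup E] [NormedSpace ℂ E]
  [NormedAddCommGroup F] [NormedSpace ℂ F]

noncomputable def cdhf0 (x y : ℝ) (a c : ℂ) (b d : ℝ) (t : ℝ) (ζ : ℂ) : ℂ :=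
  (t:ℂ)*x + Complex.I*(t:ℂ)^2*y +
    (t:ℂ)^2*(2*Complex.I*((starRingEnd ℂ) a * b - (starRingEnd ℂ) c * d))*ζ

noncomputable def cdhf1 (a : ℂ) (b : ℝ) (t : ℝ) (ζ : ℂ) : ℂ := (t:ℂ)*(a + b*ζ)

lemma cdh_key (x y : ℝ) (a c : ℂ) (b d : ℝ)
    (hbd : b^2 - d^2 = y + ‖c‖ ^2 - ‖a‖ ^2) (t : ℝ) (ζ : ℂ)
    (hζ : ‖ζ‖ = 1) :
    (cdhf0 x y a c b d t ζ).im
      = ‖cdhf1 a b t ζ‖^2 - ‖cdhf1 c d t ζ‖^2 := by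
  have hζ' : ζ.re^2 + ζ.im^2 = 1 := by
    have := Complex.sq_norm ζ
    rw [hζ] at this
    simpa [Complex.normSq_apply, sq] using this.symm
  have hbd' : b^2 - d^2 = y + (c.re^2 + c.im^2) - (a.re^2 + a.im^2) := by
    rw [hbd, Complex.sq_norm, Complex.sq_norm, Complex.normSq_apply, Complex.normSq_apply]
    ring
  simp only [cdhf0, cdhf1, ← Complex.ofReal_pow, Complex.sq_norm, Complex.normSq_apply,
    Complex.add_im, Complex.add_re, Complex.mul_im, Complex.mul_re, Complex.I_re, Complex.I_im,
    Complex.ofReal_re, Complex.ofReal_im, Complex.conj_re, Complex.conj_im, Complex.sub_re,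
    Complex.sub_im, Complex.re_ofNat, Complex.im_ofNat]
  ring_nf
  linear_combination (-(t^2*(b^2-d^2)))*hζ' + (-(t^2))*hbd'

noncomputable def cdhB (u : ℝ) : ℝ := Real.sqrt (max u 0)

lemma cdhB_nonneg (u : ℝ) : 0 ≤ cdhB u := Real.sqrt_nonneg _

lemma cdhB_sq (u : ℝ) : cdhB u ^ 2 = max u 0 :=
  Real.sq_sqrt (le_max_right _ _)

lemma cdhB_diff (u : ℝ) : cdhB u ^2 - cdhB (-u) ^2 = u := by
  rw [cdhB_sq, cdhB_sq]
  rcases le_total u 0 with h | h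
  · rw [max_eq_right h, max_eq_left (by linarith)]; ring
  · rw [max_eq_left h, max_eq_right (by linarith)]; ring

lemma cdhB_le {u s : ℝ} (hs : 0 ≤ s) (h : u ≤ s^2) : cdhB u ≤ s := by
  have : max u 0 ≤ s^2 := max_le h (by positivity)
  calc cdhB u ≤ Real.sqrt (s^2) := Real.sqrt_le_sqrt this
    _ = s := Real.sqrt_sq hs

lemma cdhf0_bound (x y : ℝ) (a c : ℂ) (b d : ℝ) (t : ℝ) (ζ : ℂ) (s : ℝ)
    (ht0 : 0 ≤ t) (ht1 : t ≤ 1) (hζ : ‖ζ‖ ≤ 1) (hs1 : s ≤ 1)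
    (hx : |x| ≤ s) (hy : |y| ≤ s) (ha : ‖a‖ ≤ s) (hc : ‖c‖ ≤ s)
    (hb : |b| ≤ s) (hd : |d| ≤ s) :
    ‖cdhf0 x y a c b d t ζ‖ ≤ 6*s := by
  have hs0 : 0 ≤ s := le_trans (abs_nonneg x) hx
  have ht2 : t^2 ≤ 1 := by nlinarith
  have ht2' : (0:ℝ) ≤ t^2 := sq_nonneg t
  simp only [cdhf0] at *
  have htn : ‖(t:ℂ)‖ ≤ 1 := by
    rw [Complex.norm_real, Real.norm_eq_abs, abs_of_nonneg ht0]; exact ht1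
  have h1 : ‖(t:ℂ)*x‖ ≤ s := by
    rw [norm_mul, Complex.norm_real, Complex.norm_real, Real.norm_eq_abs, Real.norm_eq_abs,
      abs_of_nonneg ht0]
    nlinarith [abs_nonneg x]
  have h2 : ‖Complex.I*(t:ℂ)^2*y‖ ≤ s := by
    rw [norm_mul, norm_mul, Complex.norm_I, norm_pow, Complex.norm_real, Complex.norm_real,
      Real.norm_eq_abs, Real.norm_eq_abs, abs_of_nonneg ht0]
    nlinarith [abs_nonneg y]
  have hsub : ‖(starRingEnd ℂ) a * (b:ℂ) - (starRingEnd ℂ) c * d‖ ≤ 2*s^2 := by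
    calc ‖(starRingEnd ℂ) a * (b:ℂ) - (starRingEnd ℂ) c * d‖
        ≤ ‖(starRingEnd ℂ) a * (b:ℂ)‖ + ‖(starRingEnd ℂ) c * (d:ℂ)‖ := norm_sub_le _ _
      _ ≤ 2*s^2 := by
          rw [norm_mul, norm_mul, RingHomIsometric.norm_map, RingHomIsometric.norm_map,
            Complex.norm_real, Complex.norm_real, Real.norm_eq_abs, Real.norm_eq_abs]
          nlinarith [norm_nonneg a, norm_nonneg c, abs_nonneg b, abs_nonneg d]
  have h3 : ‖(t:ℂ)^2*(2*Complex.I*((starRingEnd ℂ) a * b - (starRingEnd ℂ) c * d))*ζ‖ ≤ 4*s := by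
    have heq : ‖(t:ℂ)^2*(2*Complex.I*((starRingEnd ℂ) a * b - (starRingEnd ℂ) c * d))*ζ‖
        = ‖(t:ℂ)‖^2 * (2 * ‖(starRingEnd ℂ) a * (b:ℂ) - (starRingEnd ℂ) c * d‖) * ‖ζ‖ := by
      rw [norm_mul, norm_mul, norm_pow, norm_mul, norm_mul, Complex.norm_I]
      norm_num
    rw [heq]
    calc ‖(t:ℂ)‖^2 * (2 * ‖(starRingEnd ℂ) a * (b:ℂ) - (starRingEnd ℂ) c * d‖) * ‖ζ‖
        ≤ 1^2 * (2 * (2*s^2)) * 1 := by gcongr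
      _ ≤ 4*s := by nlinarith
  calc ‖(t:ℂ)*x + Complex.I*(t:ℂ)^2*y +
        (t:ℂ)^2*(2*Complex.I*((starRingEnd ℂ) a * b - (starRingEnd ℂ) c * d))*ζ‖
      ≤ ‖(t:ℂ)*x + Complex.I*(t:ℂ)^2*y‖ +
        ‖(t:ℂ)^2*(2*Complex.I*((starRingEnd ℂ) a * b - (starRingEnd ℂ) c * d))*ζ‖ :=
        norm_add_le _ _
    _ ≤ (‖(t:ℂ)*x‖ + ‖Complex.I*(t:ℂ)^2*y‖) + 4*s := add_le_add (norm_add_le _ _) h3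
    _ ≤ 6*s := by linarith

lemma cdhf1_bound (a : ℂ) (b : ℝ) (t : ℝ) (ζ : ℂ) (s : ℝ)
    (ht0 : 0 ≤ t) (ht1 : t ≤ 1) (hζ : ‖ζ‖ ≤ 1)
    (ha : ‖a‖ ≤ s) (hb : |b| ≤ s) :
    ‖cdhf1 a b t ζ‖ ≤ 2*s := by
  have hs0 : 0 ≤ s := le_trans (abs_nonneg b) hb
  simp only [cdhf1] at *
  have htn : ‖(t:ℂ)‖ ≤ 1 := by
    rw [Complex.norm_real, Real.norm_eq_abs, abs_of_nonneg ht0]; exact ht1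
  have hbn : ‖((b:ℝ):ℂ)‖ ≤ s := by rw [Complex.norm_real, Real.norm_eq_abs]; exact hb
  have h1 : ‖a + (b:ℂ)*ζ‖ ≤ 2*s := by
    calc ‖a + (b:ℂ)*ζ‖ ≤ ‖a‖ + ‖(b:ℂ)‖*‖ζ‖ := by
          rw [← norm_mul]; exact norm_add_le _ _
      _ ≤ 2*s := by nlinarith [norm_nonneg (((b:ℝ)):ℂ), norm_nonneg ζ]
  calc ‖(t:ℂ)*(a + b*ζ)‖ = ‖(t:ℂ)‖ * ‖a + (b:ℂ)*ζ‖ := norm_mul _ _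
    _ ≤ 2*s := by nlinarith [norm_nonneg ((t:ℝ):ℂ), norm_nonneg (a + (b:ℂ)*ζ)]

lemma euclid6_norm_le {z : EuclideanSpace ℂ (Fin 6)} {M : ℝ} (h : ∀ i, ‖z i‖ ≤ M) :
    ‖z‖ ≤ 3*M := by
  have hM : 0 ≤ M := (norm_nonneg _).trans (h 0)
  rw [EuclideanSpace.norm_eq]
  have h2 : ∑ i : Fin 6, ‖z i‖^2 ≤ 6*M^2 := by
    calc ∑ i : Fin 6, ‖z i‖^2 ≤ ∑ _i : Fin 6, M^2 :=
          Finset.sum_le_sum fun i _ => by nlinarith [h i, norm_nonneg (z i)]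
      _ = 6*M^2 := by simp
  calc Real.sqrt (∑ i : Fin 6, ‖z i‖^2) ≤ Real.sqrt ((3*M)^2) :=
        Real.sqrt_le_sqrt (by nlinarith)
    _ = 3*M := Real.sqrt_sq (by positivity)

lemma euclid6_coord_le (w : EuclideanSpace ℂ (Fin 6)) (i : Fin 6) : ‖w i‖ ≤ ‖w‖ := by
  rw [EuclideanSpace.norm_eq]
  have h : ‖w i‖^2 ≤ ∑ j : Fin 6, ‖w j‖^2 :=
    Finset.single_le_sum (f := fun j => ‖w j‖^2) (fun j _ => sq_nonneg _) (Finset.mem_univ i)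
  calc ‖w i‖ = Real.sqrt (‖w i‖^2) := (Real.sqrt_sq (norm_nonneg _)).symm
    _ ≤ _ := Real.sqrt_le_sqrt h

noncomputable def cdhU1 (w : EuclideanSpace ℂ (Fin 6)) : ℝ :=
  (w 0).im + ‖w 2‖^2 - ‖w 1‖^2

noncomputable def cdhU2 (w : EuclideanSpace ℂ (Fin 6)) : ℝ :=
  (w 3).im + ‖w 5‖^2 - ‖w 4‖^2

noncomputable def cdhPhi (w : EuclideanSpace ℂ (Fin 6)) (t : ℝ) (ζ : ℂ) :
    EuclideanSpace ℂ (Fin 6) :=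
  (PiLp.continuousLinearEquiv 2 ℂ (fun _ : Fin 6 => ℂ)).symm
    ![cdhf0 (w 0).re (w 0).im (w 1) (w 2) (cdhB (cdhU1 w)) (cdhB (-cdhU1 w)) t ζ,
      cdhf1 (w 1) (cdhB (cdhU1 w)) t ζ,
      cdhf1 (w 2) (cdhB (-cdhU1 w)) t ζ,
      cdhf0 (w 3).re (w 3).im (w 4) (w 5) (cdhB (cdhU2 w)) (cdhB (-cdhU2 w)) t ζ,
      cdhf1 (w 4) (cdhB (cdhU2 w)) t ζ,
      cdhf1 (w 5) (cdhB (-cdhU2 w)) t ζ]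

lemma cdhPhi_apply0 (w : EuclideanSpace ℂ (Fin 6)) (t : ℝ) (ζ : ℂ) :
    cdhPhi w t ζ 0
      = cdhf0 (w 0).re (w 0).im (w 1) (w 2) (cdhB (cdhU1 w)) (cdhB (-cdhU1 w)) t ζ := rfl
lemma cdhPhi_apply1 (w : EuclideanSpace ℂ (Fin 6)) (t : ℝ) (ζ : ℂ) :
    cdhPhi w t ζ 1 = cdhf1 (w 1) (cdhB (cdhU1 w)) t ζ := rfl
lemma cdhPhi_apply2 (w : EuclideanSpace ℂ (Fin 6)) (t : ℝ) (ζ : ℂ) :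
    cdhPhi w t ζ 2 = cdhf1 (w 2) (cdhB (-cdhU1 w)) t ζ := rfl
lemma cdhPhi_apply3 (w : EuclideanSpace ℂ (Fin 6)) (t : ℝ) (ζ : ℂ) :
    cdhPhi w t ζ 3
      = cdhf0 (w 3).re (w 3).im (w 4) (w 5) (cdhB (cdhU2 w)) (cdhB (-cdhU2 w)) t ζ := rfl
lemma cdhPhi_apply4 (w : EuclideanSpace ℂ (Fin 6)) (t : ℝ) (ζ : ℂ) :
    cdhPhi w t ζ 4 = cdhf1 (w 4) (cdhB (cdhU2 w)) t ζ := rfl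
lemma cdhPhi_apply5 (w : EuclideanSpace ℂ (Fin 6)) (t : ℝ) (ζ : ℂ) :
    cdhPhi w t ζ 5 = cdhf1 (w 5) (cdhB (-cdhU2 w)) t ζ := rfl

lemma cdhPhi_cont (w : EuclideanSpace ℂ (Fin 6)) :
    Continuous (fun q : ℝ × ℂ => cdhPhi w q.1 q.2) := by
  have hf0 : ∀ (x y : ℝ) (a c : ℂ) (b d : ℝ),
      Continuous (fun q : ℝ × ℂ => cdhf0 x y a c b d q.1 q.2) := by
    intro x y a c b d
    unfold cdhf0
    fun_prop
  have hf1 : ∀ (a : ℂ) (b : ℝ), Continuous (fun q : ℝ × ℂ => cdhf1 a b q.1 q.2) := by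
    intro a b
    unfold cdhf1
    fun_prop
  refine ((PiLp.continuousLinearEquiv 2 ℂ (fun _ : Fin 6 => ℂ)).symm.continuous).comp
    (continuous_pi fun i => ?_)
  fin_cases i
  exacts [hf0 _ _ _ _ _ _, hf1 _ _, hf1 _ _, hf0 _ _ _ _ _ _, hf1 _ _, hf1 _ _]

lemma cdhPhi_diff (w : EuclideanSpace ℂ (Fin 6)) (t : ℝ) :
    Differentiable ℂ (cdhPhi w t) := by
  have hf0 : ∀ (x y : ℝ) (a c : ℂ) (b d : ℝ),
      Differentiable ℂ (fun ζ : ℂ => cdhf0 x y a c b d t ζ) := by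
    intro x y a c b d
    unfold cdhf0
    fun_prop
  have hf1 : ∀ (a : ℂ) (b : ℝ), Differentiable ℂ (fun ζ : ℂ => cdhf1 a b t ζ) := by
    intro a b
    unfold cdhf1
    fun_prop
  refine ((PiLp.continuousLinearEquiv 2 ℂ (fun _ : Fin 6 => ℂ)).symm.toContinuousLinearMap.differentiable).comp
    (differentiable_pi.2 fun i => ?_)
  fin_cases i
  exacts [hf0 _ _ _ _ _ _, hf1 _ _, hf1 _ _, hf0 _ _ _ _ _ _, hf1 _ _, hf1 _ _]

lemma cdhPhi_zero (w : EuclideanSpace ℂ (Fin 6)) (ζ : ℂ) : cdhPhi w 0 ζ = 0 := by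
  have h : ∀ i, cdhPhi w 0 ζ i = 0 := by
    intro i
    fin_cases i <;>
      simp [cdhPhi_apply0, cdhPhi_apply1, cdhPhi_apply2, cdhPhi_apply3, cdhPhi_apply4,
        cdhPhi_apply5, cdhf0, cdhf1]
  ext i
  rw [h i]
  rfl

lemma cdhPhi_one (w : EuclideanSpace ℂ (Fin 6)) : cdhPhi w 1 0 = w := by
  have h0 : ∀ (x y : ℝ) (a c : ℂ) (b d : ℝ) (z : ℂ), z.re = x → z.im = y →
      cdhf0 x y a c b d 1 0 = z := by
    intro x y a c b d z hre him
    simp [cdhf0, Complex.ext_iff, ← hre, ← him]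
  have h1 : ∀ (a : ℂ) (b : ℝ), cdhf1 a b 1 0 = a := by
    intro a b; simp [cdhf1]
  ext i
  fin_cases i
  · exact (cdhPhi_apply0 w 1 0).trans (h0 _ _ _ _ _ _ _ rfl rfl)
  · exact (cdhPhi_apply1 w 1 0).trans (h1 _ _)
  · exact (cdhPhi_apply2 w 1 0).trans (h1 _ _)
  · exact (cdhPhi_apply3 w 1 0).trans (h0 _ _ _ _ _ _ _ rfl rfl)
  · exact (cdhPhi_apply4 w 1 0).trans (h1 _ _)
  · exact (cdhPhi_apply5 w 1 0).trans (h1 _ _)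

lemma cdhU1_le (w : EuclideanSpace ℂ (Fin 6)) (s : ℝ) (hs0 : 0 ≤ s) (hs1 : s ≤ 1)
    (hw : ‖w‖ ≤ s^2/2) : |cdhU1 w| ≤ s^2 := by
  have h0 : ‖w 0‖ ≤ s^2/2 := by
    exact (euclid6_coord_le w 0).trans hw
  have h1 : ‖w 1‖ ≤ s^2/2 := by
    exact (euclid6_coord_le w 1).trans hw
  have h2 : ‖w 2‖ ≤ s^2/2 := by
    exact (euclid6_coord_le w 2).trans hw
  have him : |(w 0).im| ≤ s^2/2 := (Complex.abs_im_le_norm _).trans h0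
  have ha1 : (0:ℝ) ≤ ‖w 1‖ := norm_nonneg _
  have ha2 : (0:ℝ) ≤ ‖w 2‖ := norm_nonneg _
  have h1sq : ‖w 1‖^2 ≤ (s^2/2)^2 := by nlinarith
  have h2sq : ‖w 2‖^2 ≤ (s^2/2)^2 := by nlinarith
  have hsq : s^2 ≤ 1 := by nlinarith
  have hs4 : (s^2/2)^2 ≤ s^2/4 := by nlinarith [mul_le_of_le_one_right (sq_nonneg s) hsq]
  have hsq1 : (0:ℝ) ≤ ‖w 1‖^2 := sq_nonneg _
  have hsq2 : (0:ℝ) ≤ ‖w 2‖^2 := sq_nonneg _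
  rw [abs_le]
  unfold cdhU1
  constructor <;> nlinarith [abs_le.1 him]

lemma cdhU2_le (w : EuclideanSpace ℂ (Fin 6)) (s : ℝ) (hs0 : 0 ≤ s) (hs1 : s ≤ 1)
    (hw : ‖w‖ ≤ s^2/2) : |cdhU2 w| ≤ s^2 := by
  have h0 : ‖w 3‖ ≤ s^2/2 := by
    exact (euclid6_coord_le w 3).trans hw
  have h1 : ‖w 4‖ ≤ s^2/2 := by
    exact (euclid6_coord_le w 4).trans hw
  have h2 : ‖w 5‖ ≤ s^2/2 := by
    exact (euclid6_coord_le w 5).trans hw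
  have him : |(w 3).im| ≤ s^2/2 := (Complex.abs_im_le_norm _).trans h0
  have ha1 : (0:ℝ) ≤ ‖w 4‖ := norm_nonneg _
  have ha2 : (0:ℝ) ≤ ‖w 5‖ := norm_nonneg _
  have h1sq : ‖w 4‖^2 ≤ (s^2/2)^2 := by nlinarith
  have h2sq : ‖w 5‖^2 ≤ (s^2/2)^2 := by nlinarith
  have hsq : s^2 ≤ 1 := by nlinarith
  have hs4 : (s^2/2)^2 ≤ s^2/4 := by nlinarith [mul_le_of_le_one_right (sq_nonneg s) hsq]
  have hsq1 : (0:ℝ) ≤ ‖w 4‖^2 := sq_nonneg _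
  have hsq2 : (0:ℝ) ≤ ‖w 5‖^2 := sq_nonneg _
  rw [abs_le]
  unfold cdhU2
  constructor <;> nlinarith [abs_le.1 him]

lemma cdhPhi_norm_le (w : EuclideanSpace ℂ (Fin 6)) (s : ℝ) (hs0 : 0 ≤ s) (hs1 : s ≤ 1)
    (hw : ‖w‖ ≤ s^2/2) (t : ℝ) (ht0 : 0 ≤ t) (ht1 : t ≤ 1) (ζ : ℂ)
    (hζ : ‖ζ‖ ≤ 1) : ‖cdhPhi w t ζ‖ ≤ 18*s := by
  have hwi : ∀ i, ‖w i‖ ≤ s := by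
    intro i
    refine ((euclid6_coord_le w i).trans hw).trans (by nlinarith)
  have hre : ∀ i, |(w i).re| ≤ s := fun i => (Complex.abs_re_le_norm _).trans (hwi i)
  have him : ∀ i, |(w i).im| ≤ s := fun i => (Complex.abs_im_le_norm _).trans (hwi i)
  have hU1 := cdhU1_le w s hs0 hs1 hw
  have hU2 := cdhU2_le w s hs0 hs1 hw
  have hB : ∀ u : ℝ, |u| ≤ s^2 → |cdhB u| ≤ s := by
    intro u hu
    rw [abs_of_nonneg (cdhB_nonneg u)]
    exact cdhB_le hs0 ((le_abs_self u).trans hu)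
  have hb1 : |cdhB (cdhU1 w)| ≤ s := hB _ hU1
  have hd1 : |cdhB (-cdhU1 w)| ≤ s := hB _ (by rwa [abs_neg])
  have hb2 : |cdhB (cdhU2 w)| ≤ s := hB _ hU2
  have hd2 : |cdhB (-cdhU2 w)| ≤ s := hB _ (by rwa [abs_neg])
  have key : ∀ i, ‖cdhPhi w t ζ i‖ ≤ 6*s := ?_
  · calc ‖cdhPhi w t ζ‖ ≤ 3*(6*s) := euclid6_norm_le key
      _ = 18*s := by ring
  intro i
  have h6 : ∀ z : ℂ, ‖z‖ ≤ 6*s → ‖z‖ ≤ 6*s := by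
    intro z h; exact h
  have h2to6 : ∀ z : ℂ, ‖z‖ ≤ 2*s → ‖z‖ ≤ 6*s := by
    intro z h; nlinarith
  fin_cases i
  · exact h6 _ (cdhf0_bound _ _ _ _ _ _ _ _ _ ht0 ht1 hζ hs1 (hre 0) (him 0) (hwi 1) (hwi 2) hb1 hd1)
  · exact h6 _ (h2to6 _ (cdhf1_bound _ _ _ _ _ ht0 ht1 hζ (hwi 1) hb1))
  · exact h6 _ (h2to6 _ (cdhf1_bound _ _ _ _ _ ht0 ht1 hζ (hwi 2) hd1))
  · exact h6 _ (cdhf0_bound _ _ _ _ _ _ _ _ _ ht0 ht1 hζ hs1 (hre 3) (him 3) (hwi 4) (hwi 5) hb2 hd2)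
  · exact h6 _ (h2to6 _ (cdhf1_bound _ _ _ _ _ ht0 ht1 hζ (hwi 4) hb2))
  · exact h6 _ (h2to6 _ (cdhf1_bound _ _ _ _ _ ht0 ht1 hζ (hwi 5) hd2))

lemma cdhPhi_bdry1 (w : EuclideanSpace ℂ (Fin 6)) (t : ℝ) (ζ : ℂ)
    (hζ : ‖ζ‖ = 1) :
    (cdhPhi w t ζ 0).im
      = ‖cdhPhi w t ζ 1‖^2 - ‖cdhPhi w t ζ 2‖^2 := by
  rw [cdhPhi_apply0, cdhPhi_apply1, cdhPhi_apply2]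
  exact cdh_key _ _ _ _ _ _ (cdhB_diff (cdhU1 w)) t ζ hζ

lemma cdhPhi_bdry2 (w : EuclideanSpace ℂ (Fin 6)) (t : ℝ) (ζ : ℂ)
    (hζ : ‖ζ‖ = 1) :
    (cdhPhi w t ζ 3).im
      = ‖cdhPhi w t ζ 4‖^2 - ‖cdhPhi w t ζ 5‖^2 := by
  rw [cdhPhi_apply3, cdhPhi_apply4, cdhPhi_apply5]
  exact cdh_key _ _ _ _ _ _ (cdhB_diff (cdhU2 w)) t ζ hζ

/-- the generic codimension-2 submanifold in ℂ⁶ satisfies the contracting disc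
hull condition at the origin. -/
theorem cdh_condition_submanifold_C6 :
    CDHConditionAt
      {z : EuclideanSpace ℂ (Fin 6) |
        (z 0).im = ‖z 1‖ ^ 2 - ‖z 2‖ ^ 2 ∧
        (z 3).im = ‖z 4‖ ^ 2 - ‖z 5‖ ^ 2 ∧ ‖z‖ < 1}
      (0 : EuclideanSpace ℂ (Fin 6)) := by
  intro K hKV hKcomp hKnhd
  obtain ⟨O, hOopen, hO0, hOsub⟩ := mem_nhdsWithin.1 hKnhd
  obtain ⟨δ, hδpos, hδsub⟩ := Metric.isOpen_iff.1 hOopen 0 hO0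
  have hδ'pos : 0 < min δ 1 := lt_min hδpos one_pos
  set δ' := min δ 1 with hδ'def
  have hδ'le1 : δ' ≤ 1 := min_le_right _ _
  have hδ'leδ : δ' ≤ δ := min_le_left _ _
  set s := δ'/19 with hsdef
  have hs0 : 0 ≤ s := by positivity
  have hs1 : s ≤ 1 := by rw [hsdef]; linarith
  set r := s^2/2 with hrdef
  have hrpos : 0 < r := by positivity
  have h0K : (0 : EuclideanSpace ℂ (Fin 6)) ∈ K := by
    refine hOsub ⟨hO0, ?_, ?_, ?_⟩ <;> simp
  have hball : ball (0 : EuclideanSpace ℂ (Fin 6)) r ⊆ contractingDiscHull K := by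
    intro w hw
    rw [mem_ball_zero_iff] at hw
    have hwr : ‖w‖ ≤ s^2/2 := le_of_lt hw
    intro ε hε
    refine ⟨cdhPhi w, (cdhPhi_cont w).continuousOn, ?_, ?_, cdhPhi_one w, ?_⟩
    · intro t ht
      exact ⟨(cdhPhi_diff w t).continuous.continuousOn, (cdhPhi_diff w t).differentiableOn⟩
    · rintro t ht z ⟨ζ, hζmem, rfl⟩
      have hζ : ‖ζ‖ = 1 := by
        exact mem_sphere_zero_iff_norm.1 hζmem
      have hnorm : ‖cdhPhi w t ζ‖ ≤ 18*s :=
        cdhPhi_norm_le w s hs0 hs1 hwr t ht.1 ht.2 ζ (le_of_eq hζ)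
      have hlt : ‖cdhPhi w t ζ‖ < δ' := by
        calc ‖cdhPhi w t ζ‖ ≤ 18*s := hnorm
          _ < δ' := by rw [hsdef]; linarith
      refine Metric.self_subset_thickening hε K (hOsub ⟨?_, ?_, ?_, ?_⟩)
      · exact hδsub (mem_ball_zero_iff.2 (lt_of_lt_of_le hlt hδ'leδ))
      · exact cdhPhi_bdry1 w t ζ hζ
      · exact cdhPhi_bdry2 w t ζ hζ
      · exact lt_of_lt_of_le hlt hδ'le1
    · rintro z ⟨ζ, hζmem, rfl⟩
      rw [cdhPhi_zero]
      exact Metric.self_subset_thickening hε K h0K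
  exact mem_interior.2 ⟨ball 0 r, hball, isOpen_ball, mem_ball_self hrpos⟩
end

section
/- Let Φ : ℂ^n → ℂ^m be an entire holomorphic map and let K ⊆ ℂ^n be compact. Then Φ maps the contracting disc hull of K into the contracting disc hull of Φ(K); that is, Φ(K̂_CD) ⊆ (Φ(K))̂_CD. -/
open Metric Set Filter Topology

variable {E F : Type*} [NormedAddCommGroup E] [NormedSpace ℂ E]
  [NormedAddCommGroup F] [NormedSpace ℂ F]

/-- an entire holomorphic map sends the contracting disc hull of a compact set
into the contracting disc hull of its image. -/
theorem image_of_contractingDiscHull {n m : ℕ}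
    (Φ : EuclideanSpace ℂ (Fin n) → EuclideanSpace ℂ (Fin m))
    (hΦ : Differentiable ℂ Φ)
    (K : Set (EuclideanSpace ℂ (Fin n))) (hK : IsCompact K) :
    Φ '' contractingDiscHull K ⊆ contractingDiscHull (Φ '' K) := by
  rintro _ ⟨z, hz, rfl⟩
  intro ε hε
  have hL : IsCompact (cthickening 1 K) := hK.cthickening
  have hUC : UniformContinuousOn Φ (cthickening 1 K) :=
    hL.uniformContinuousOn_of_continuous hΦ.continuous.continuousOn
  rw [Metric.uniformContinuousOn_iff] at hUC
  obtain ⟨δ', hδ'pos, hδ'⟩ := hUC ε hε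
  set δ := min δ' 1 with hδdef
  have hδpos : 0 < δ := lt_min hδ'pos one_pos
  obtain ⟨φ, hcont, hdisc, hbd, hc, h0⟩ := hz δ hδpos
  have key : ∀ x ∈ thickening δ K, Φ x ∈ thickening ε (Φ '' K) := by
    intro x hx
    obtain ⟨k, hk, hxk⟩ := mem_thickening_iff.mp hx
    have hxL : x ∈ cthickening 1 K :=
      mem_cthickening_of_dist_le x k 1 K hk (hxk.le.trans (min_le_right _ _))
    have hkL : k ∈ cthickening 1 K := self_subset_cthickening K hk
    have hdist : dist (Φ x) (Φ k) < ε :=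
      hδ' x hxL k hkL (hxk.trans_le (min_le_left _ _))
    exact mem_thickening_iff.mpr ⟨Φ k, ⟨k, hk, rfl⟩, hdist⟩
  refine ⟨fun t w => Φ (φ t w), ?_, ?_, ?_, by simp [hc], ?_⟩
  · exact hΦ.continuous.comp_continuousOn hcont
  · intro t ht
    exact ⟨hΦ.continuous.comp_continuousOn (hdisc t ht).1,
      hΦ.differentiableOn.comp (hdisc t ht).2 (mapsTo_univ _ _)⟩
  · intro t ht
    rintro _ ⟨w, hw, rfl⟩
    exact key _ (hbd t ht ⟨w, hw, rfl⟩)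
  · rintro _ ⟨w, hw, rfl⟩
    exact key _ (h0 ⟨w, hw, rfl⟩)
end

section
/- The set V = { (z, w) ∈ ℂ² : |z|² − |w|² = 0 and |z|² + |w|² < 1 } satisfies the contracting disc hull condition at the origin. -/
open Metric Set Filter Topology

variable {E F : Type*} [NormedAddCommGroup E] [NormedSpace ℂ E]
  [NormedAddCommGroup F] [NormedSpace ℂ F]

section Aux

open Metric Set Filter Topology

lemma blaschke_norm {b ζ : ℂ} (hζ : ‖ζ‖ = 1) :
    ‖1 + (starRingEnd ℂ) b * ζ‖ = ‖ζ + b‖ := by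
  have hz1 : ζ * (starRingEnd ℂ) ζ = 1 := by
    rw [Complex.mul_conj']
    norm_cast
    rw [hζ]; norm_num
  have h1 : ζ * (starRingEnd ℂ) (ζ + b) = 1 + (starRingEnd ℂ) b * ζ := by
    rw [map_add, mul_add, hz1]; ring
  calc ‖1 + (starRingEnd ℂ) b * ζ‖ = ‖ζ * (starRingEnd ℂ) (ζ + b)‖ := by rw [h1]
    _ = ‖ζ + b‖ := by rw [norm_mul, hζ, RCLike.norm_conj, one_mul]

lemma blaschke_den_ne {b : ℂ} (hb : ‖b‖ < 1) {ζ : ℂ} (hζ : ‖ζ‖ ≤ 1) :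
    1 + (starRingEnd ℂ) b * ζ ≠ 0 := by
  intro h
  have h2 : ‖(starRingEnd ℂ) b * ζ‖ < 1 := by
    rw [norm_mul, RCLike.norm_conj]
    calc ‖b‖ * ‖ζ‖ ≤ ‖b‖ * 1 := by nlinarith [norm_nonneg b]
      _ < 1 := by linarith
  have : (starRingEnd ℂ) b * ζ = -1 := by linear_combination h
  rw [this] at h2; simp at h2

lemma mem_hull_of_mem {E : Type*} [NormedAddCommGroup E] [NormedSpace ℂ E]
    {K : Set E} {p : E} (hp : p ∈ K) : p ∈ contractingDiscHull K := by
  intro ε hε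
  refine ⟨fun _ _ => p, continuousOn_const,
    fun t _ => ⟨continuousOn_const, differentiableOn_const _⟩,
    fun t _ => ?_, rfl, ?_⟩ <;>
  · rintro x ⟨ζ, -, rfl⟩
    exact self_subset_thickening hε K hp

lemma mem_hull_left {K : Set (ℂ × ℂ)} {z w : ℂ}
    (hzw : ‖z‖ < ‖w‖)
    (hK : ∀ c : ℂ × ℂ, ‖c.1‖ = ‖c.2‖ → ‖c‖ ≤ ‖w‖ → c ∈ K) :
    (z, w) ∈ contractingDiscHull K := by
  have hw : w ≠ 0 := by rintro rfl; simp at hzw; exact (norm_nonneg z).not_gt hzw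
  set b : ℂ := z / w with hbdef
  have hb : ‖b‖ < 1 := by
    rw [hbdef, norm_div, div_lt_one (norm_pos_iff.mpr hw)]; exact hzw
  set f : ℂ → ℂ := fun ζ => w * (ζ + b) / (1 + (starRingEnd ℂ) b * ζ) with hfdef
  have hfnorm : ∀ ζ : ℂ, ‖ζ‖ = 1 → ‖f ζ‖ = ‖w‖ := by
    intro ζ hζ
    have hne : ζ + b ≠ 0 := by
      intro h
      have : ζ = -b := by linear_combination h
      rw [this, norm_neg] at hζ; linarith
    rw [hfdef]
    simp only [norm_div, norm_mul]
    rw [blaschke_norm hζ, mul_div_assoc, div_self (norm_ne_zero_iff.mpr hne), mul_one]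
  have hfc : ContinuousOn f (closedBall (0:ℂ) 1) := by
    apply ContinuousOn.div
    · exact (continuous_const.mul (continuous_id.add continuous_const)).continuousOn
    · exact (continuous_const.add (continuous_const.mul continuous_id)).continuousOn
    · intro ζ hζ; exact blaschke_den_ne hb (mem_closedBall_zero_iff.mp hζ)
  have hfd : DifferentiableOn ℂ f (closedBall (0:ℂ) 1) := by
    apply DifferentiableOn.div
    · exact ((differentiable_const w).mul (differentiable_id.add_const b)).differentiableOn
    · exact ((differentiable_const (1:ℂ)).add
        ((differentiable_const _).mul differentiable_id)).differentiableOn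
    · intro ζ hζ; exact blaschke_den_ne hb (mem_closedBall_zero_iff.mp hζ)
  set φ : ℝ → ℂ → ℂ × ℂ := fun t ζ => t • (f ζ, w) with hφdef
  intro ε hε
  refine ⟨φ, ?_, ?_, ?_, ?_, ?_⟩
  · exact continuousOn_fst.smul
      (((hfc.comp continuousOn_snd (fun q hq => hq.2)).prodMk continuousOn_const))
  · intro t _
    constructor
    · exact (continuousOn_const (c := t)).smul (hfc.prodMk continuousOn_const)
    · exact (((hfd.mono ball_subset_closedBall).prodMk (differentiableOn_const w)).const_smul t)
  · intro t ht x hx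
    obtain ⟨ζ, hζ, rfl⟩ := hx
    rw [mem_sphere_zero_iff_norm] at hζ
    apply self_subset_thickening hε
    apply hK
    · show ‖t • f ζ‖ = ‖t • w‖
      rw [norm_smul, norm_smul, hfnorm ζ hζ]
    · rw [hφdef]
      simp only [norm_smul, Prod.norm_def]
      rw [hfnorm ζ hζ]
      simp only [max_self]
      calc ‖t‖ * ‖w‖ ≤ 1 * ‖w‖ := by
            apply mul_le_mul_of_nonneg_right _ (norm_nonneg w)
            rw [Real.norm_eq_abs, abs_le]; exact ⟨by linarith [ht.1], ht.2⟩
        _ = ‖w‖ := one_mul _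
  · show (1:ℝ) • (f 0, w) = (z, w)
    rw [one_smul]
    have : f 0 = z := by
      rw [hfdef]; simp [hbdef]
      field_simp
    rw [this]
  · rintro x ⟨ζ, -, rfl⟩
    show (0:ℝ) • (f ζ, w) ∈ _
    rw [zero_smul]
    exact self_subset_thickening hε K (hK 0 (by simp) (by simp))

lemma mem_hull_right {K : Set (ℂ × ℂ)} {z w : ℂ}
    (hzw : ‖w‖ < ‖z‖)
    (hK : ∀ c : ℂ × ℂ, ‖c.1‖ = ‖c.2‖ → ‖c‖ ≤ ‖z‖ → c ∈ K) :
    (z, w) ∈ contractingDiscHull K := by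
  have hz : z ≠ 0 := by rintro rfl; simp at hzw; exact (norm_nonneg w).not_gt hzw
  set b : ℂ := w / z with hbdef
  have hb : ‖b‖ < 1 := by
    rw [hbdef, norm_div, div_lt_one (norm_pos_iff.mpr hz)]; exact hzw
  set f : ℂ → ℂ := fun ζ => z * (ζ + b) / (1 + (starRingEnd ℂ) b * ζ) with hfdef
  have hfnorm : ∀ ζ : ℂ, ‖ζ‖ = 1 → ‖f ζ‖ = ‖z‖ := by
    intro ζ hζ
    have hne : ζ + b ≠ 0 := by
      intro h
      have : ζ = -b := by linear_combination h
      rw [this, norm_neg] at hζ; linarith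
    rw [hfdef]
    simp only [norm_div, norm_mul]
    rw [blaschke_norm hζ, mul_div_assoc, div_self (norm_ne_zero_iff.mpr hne), mul_one]
  have hfc : ContinuousOn f (closedBall (0:ℂ) 1) := by
    apply ContinuousOn.div
    · exact (continuous_const.mul (continuous_id.add continuous_const)).continuousOn
    · exact (continuous_const.add (continuous_const.mul continuous_id)).continuousOn
    · intro ζ hζ; exact blaschke_den_ne hb (mem_closedBall_zero_iff.mp hζ)
  have hfd : DifferentiableOn ℂ f (closedBall (0:ℂ) 1) := by
    apply DifferentiableOn.div
    · exact ((differentiable_const z).mul (differentiable_id.add_const b)).differentiableOn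
    · exact ((differentiable_const (1:ℂ)).add
        ((differentiable_const _).mul differentiable_id)).differentiableOn
    · intro ζ hζ; exact blaschke_den_ne hb (mem_closedBall_zero_iff.mp hζ)
  set φ : ℝ → ℂ → ℂ × ℂ := fun t ζ => t • (z, f ζ) with hφdef
  intro ε hε
  refine ⟨φ, ?_, ?_, ?_, ?_, ?_⟩
  · exact continuousOn_fst.smul
      ((continuousOn_const.prodMk (hfc.comp continuousOn_snd (fun q hq => hq.2))))
  · intro t _
    constructor
    · exact (continuousOn_const (c := t)).smul (continuousOn_const.prodMk hfc)
    · exact (((differentiableOn_const z).prodMk (hfd.mono ball_subset_closedBall)).const_smul t)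
  · intro t ht x hx
    obtain ⟨ζ, hζ, rfl⟩ := hx
    rw [mem_sphere_zero_iff_norm] at hζ
    apply self_subset_thickening hε
    apply hK
    · show ‖t • z‖ = ‖t • f ζ‖
      rw [norm_smul, norm_smul, hfnorm ζ hζ]
    · rw [hφdef]
      simp only [norm_smul, Prod.norm_def]
      rw [hfnorm ζ hζ]
      simp only [max_self]
      calc ‖t‖ * ‖z‖ ≤ 1 * ‖z‖ := by
            apply mul_le_mul_of_nonneg_right _ (norm_nonneg z)
            rw [Real.norm_eq_abs, abs_le]; exact ⟨by linarith [ht.1], ht.2⟩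
        _ = ‖z‖ := one_mul _
  · show (1:ℝ) • (z, f 0) = (z, w)
    rw [one_smul]
    have : f 0 = w := by
      rw [hfdef]; simp [hbdef]
      field_simp
    rw [this]
  · rintro x ⟨ζ, -, rfl⟩
    show (0:ℝ) • (z, f ζ) ∈ _
    rw [zero_smul]
    exact self_subset_thickening hε K (hK 0 (by simp) (by simp))

end Aux

/-- the circular cone `|z|² − |w|² = 0`, `|z|² + |w|² < 1` satisfies the
contracting disc hull condition at the origin. -/
theorem cdh_condition_cone :
    CDHConditionAt
      {zw : ℂ × ℂ |
        ‖zw.1‖ ^ 2 - ‖zw.2‖ ^ 2 = 0 ∧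
        ‖zw.1‖ ^ 2 + ‖zw.2‖ ^ 2 < 1}
      (0 : ℂ × ℂ) := by
  intro K hKV hKc hKn
  rw [Metric.mem_nhdsWithin_iff] at hKn
  obtain ⟨δ, hδ, hδK⟩ := hKn
  set r : ℝ := min δ 1 / 2 with hrdef
  have hr : 0 < r := by positivity
  have hrδ : r < δ := by
    rw [hrdef]
    rcases min_cases δ 1 with ⟨h1, h2⟩ | ⟨h1, h2⟩ <;> rw [h1] <;> linarith
  have hr2 : r ≤ 1 / 2 := by
    rw [hrdef]
    have := min_le_right δ 1
    linarith
  have hsub : Metric.ball (0 : ℂ × ℂ) r ⊆ contractingDiscHull K := by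
    intro p hp
    have hpn : ‖p‖ < r := by rwa [mem_ball_zero_iff] at hp
    have hmem : ∀ c : ℂ × ℂ, ‖c.1‖ = ‖c.2‖ → ‖c‖ ≤ ‖p‖ → c ∈ K := by
      intro c h1 h2
      apply hδK
      refine ⟨mem_ball_zero_iff.mpr (by linarith), ?_, ?_⟩
      · rw [h1, sub_self]
      · have hc1 : ‖c.1‖ ≤ ‖c‖ := by rw [Prod.norm_def]; exact le_max_left _ _
        have hc2 : ‖c.2‖ ≤ ‖c‖ := by rw [Prod.norm_def]; exact le_max_right _ _
        have h3 : ‖c.1‖ < 1/2 := by linarith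
        have h4 : ‖c.2‖ < 1/2 := by linarith
        nlinarith [norm_nonneg c.1, norm_nonneg c.2]
    rcases lt_trichotomy ‖p.1‖ ‖p.2‖ with h | h | h
    · have h2 : ‖p.2‖ ≤ ‖p‖ := by rw [Prod.norm_def]; exact le_max_right _ _
      have := mem_hull_left h (fun c hc1 hc2 => hmem c hc1 (hc2.trans h2))
      simpa using this
    · exact mem_hull_of_mem (hmem p h le_rfl)
    · have h2 : ‖p.1‖ ≤ ‖p‖ := by rw [Prod.norm_def]; exact le_max_left _ _
      have := mem_hull_right h (fun c hc1 hc2 => hmem c hc1 (hc2.trans h2))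
      simpa using this
  exact mem_interior.mpr ⟨Metric.ball 0 r, hsub, Metric.isOpen_ball, Metric.mem_ball_self hr⟩
end

section
/- Let 𝕋 = { z ∈ ℂ : |z| = 1 } be the unit circle. Then the contracting disc hull of 𝕋 equals 𝕋 itself: 𝕋̂_CD = 𝕋. -/
open Metric Set Filter Topology

variable {E F : Type*} [NormedAddCommGroup E] [NormedSpace ℂ E]
  [NormedAddCommGroup F] [NormedSpace ℂ F]

lemma norm_lt_of_mem_thick {x : ℂ} {ε : ℝ} (h : x ∈ thickening ε (sphere (0:ℂ) 1)) :
    1 - ε < ‖x‖ ∧ ‖x‖ < 1 + ε := by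
  obtain ⟨y, hy, hd⟩ := Metric.mem_thickening_iff.1 h
  have hy1 : ‖y‖ = 1 := mem_sphere_zero_iff_norm.1 hy
  have h1 : ‖y‖ - ‖x‖ ≤ dist x y := by
    rw [dist_eq_norm, ← norm_neg (x - y)]; simpa using norm_sub_norm_le y x
  have h2 : ‖x‖ ≤ ‖y‖ + dist x y := by rw [dist_eq_norm]; exact norm_le_insert' x y
  constructor <;> [linarith [hy1 ▸ h1]; linarith [hy1 ▸ h2]]

/-- Minimum modulus bound: if an analytic disc has boundary values of norm `> 1 - ε`
and omits the value `z` with `1 - ε - ‖z‖ > 0`, then `‖φ w - z‖ ≥ 1 - ε - ‖z‖` on the disc. -/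
lemma min_mod {φ : ℂ → ℂ} (hφ : IsAnalyticDisc φ) {ε : ℝ} {z : ℂ}
    (hb : φ '' sphere (0:ℂ) 1 ⊆ thickening ε (sphere (0:ℂ) 1))
    (hm : 0 < 1 - ε - ‖z‖) (hne : ∀ w ∈ closedBall (0:ℂ) 1, φ w ≠ z) :
    ∀ w ∈ closedBall (0:ℂ) 1, 1 - ε - ‖z‖ ≤ ‖φ w - z‖ := by
  set m := 1 - ε - ‖z‖ with hmdef
  have hbd : ∀ w ∈ sphere (0:ℂ) 1, m ≤ ‖φ w - z‖ := by
    intro w hw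
    have h1 : 1 - ε < ‖φ w‖ := (norm_lt_of_mem_thick (hb ⟨w, hw, rfl⟩)).1
    have := norm_sub_norm_le (φ w) z
    have h2 : ‖φ w‖ - ‖z‖ ≤ ‖φ w - z‖ := norm_sub_norm_le _ _
    simp only [hmdef]; linarith
  have hpos : ∀ w ∈ closedBall (0:ℂ) 1, 0 < ‖φ w - z‖ := fun w hw =>
    norm_pos_iff.2 (sub_ne_zero.2 (hne w hw))
  have hg : DiffContOnCl ℂ (fun w => (φ w - z)⁻¹) (ball (0:ℂ) 1) := by
    refine ⟨DifferentiableOn.inv (hφ.2.sub_const z) ?_, ?_⟩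
    · exact fun w hw => sub_ne_zero.2 (hne w (ball_subset_closedBall hw))
    · rw [closure_ball (0:ℂ) one_ne_zero]
      exact ((hφ.1.sub continuousOn_const).inv₀ fun w hw => sub_ne_zero.2 (hne w hw))
  intro w hw
  have hinv : ‖(φ w - z)⁻¹‖ ≤ m⁻¹ := by
    apply Complex.norm_le_of_forall_mem_frontier_norm_le isBounded_ball hg
    · rw [frontier_ball (0:ℂ) one_ne_zero]
      intro v hv
      rw [norm_inv]
      exact inv_anti₀ hm (hbd v hv)
    · rwa [closure_ball (0:ℂ) one_ne_zero]
  rw [norm_inv] at hinv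
  exact (inv_le_inv₀ (hpos w hw) hm).mp hinv

/-- Maximum modulus bound for an analytic disc with boundary near the circle. -/
lemma max_mod {φ : ℂ → ℂ} (hφ : IsAnalyticDisc φ) {ε : ℝ} (hε : 0 < ε)
    (hb : φ '' sphere (0:ℂ) 1 ⊆ thickening ε (sphere (0:ℂ) 1)) :
    ∀ w ∈ closedBall (0:ℂ) 1, ‖φ w‖ ≤ 1 + ε := by
  intro w hw
  apply Complex.norm_le_of_forall_mem_frontier_norm_le isBounded_ball
    ⟨hφ.2, by rw [closure_ball (0:ℂ) one_ne_zero]; exact hφ.1⟩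
  · rw [frontier_ball (0:ℂ) one_ne_zero]
    exact fun v hv => ((norm_lt_of_mem_thick (hb ⟨v, hv, rfl⟩)).2).le
  · rwa [closure_ball (0:ℂ) one_ne_zero]

/-- the contracting disc hull of the unit circle is the unit circle itself. -/
theorem contractingDiscHull_circle :
    contractingDiscHull (sphere (0 : ℂ) 1) = sphere (0 : ℂ) 1 := by
  apply Subset.antisymm
  · intro z hz
    rw [mem_sphere_zero_iff_norm]
    -- upper bound
    have hub : ‖z‖ ≤ 1 := by
      refine le_of_forall_pos_le_add fun ε hε => ?_
      obtain ⟨φ, hcont, hdisc, hbdy, hz1, h0⟩ := hz ε hε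
      have h1 : (1:ℝ) ∈ Icc (0:ℝ) 1 := ⟨zero_le_one, le_refl 1⟩
      have := max_mod (hdisc 1 h1) hε (hbdy 1 h1) 0 (mem_closedBall_self zero_le_one)
      rwa [hz1] at this
    rcases eq_or_lt_of_le hub with h | hlt
    · exact h
    -- lower bound: assume ‖z‖ < 1, derive contradiction
    exfalso
    set ε : ℝ := (1 - ‖z‖) / 2 with hεdef
    have hε : 0 < ε := by simp only [hεdef]; linarith
    have hm : 0 < 1 - ε - ‖z‖ := by simp only [hεdef]; linarith
    obtain ⟨φ, hcont, hdisc, hbdy, hz1, h0⟩ := hz ε hε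
    set ψ : ℝ × ℂ → ℂ := fun q => φ q.1 q.2 with hψdef
    set P : Set (ℝ × ℂ) := Icc (0:ℝ) 1 ×ˢ closedBall (0:ℂ) 1 with hPdef
    have hPc : IsCompact P := (isCompact_Icc).prod (isCompact_closedBall _ _)
    set K : Set (ℝ × ℂ) := P ∩ ψ ⁻¹' {z} with hKdef
    have hKclosed : IsClosed K :=
      hcont.preimage_isClosed_of_isClosed (isClosed_Icc.prod isClosed_closedBall) isClosed_singleton
    have hKc : IsCompact K := hPc.of_isClosed_subset hKclosed inter_subset_left
    set T : Set ℝ := Prod.fst '' K with hTdef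
    have hTc : IsCompact T := hKc.image continuous_fst
    have h1T : (1:ℝ) ∈ T := by
      refine ⟨(1, 0), ⟨⟨⟨zero_le_one, le_refl 1⟩, mem_closedBall_self zero_le_one⟩, ?_⟩, rfl⟩
      simpa [hψdef] using hz1
    obtain ⟨t₀, ht₀T, hlb⟩ := hTc.exists_isLeast ⟨1, h1T⟩
    obtain ⟨q, ⟨⟨hqI, hqB⟩, hqz⟩, hq1⟩ := ht₀T
    set w₀ := q.2 with hw₀def
    have ht₀I : t₀ ∈ Icc (0:ℝ) 1 := hq1 ▸ hqI
    have hw₀ : w₀ ∈ closedBall (0:ℂ) 1 := hqB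
    have hψz' : φ t₀ w₀ = z := by rw [← hq1]; exact hqz
    -- t₀ > 0
    have ht₀pos : 0 < t₀ := by
      rcases lt_or_eq_of_le ht₀I.1 with h | h
      · exact h
      · exfalso
        have : φ 0 w₀ ∈ thickening ε (sphere (0:ℂ) 1) := h0 ⟨w₀, hw₀, rfl⟩
        rw [← h] at hψz'
        rw [hψz'] at this
        have := (norm_lt_of_mem_thick this).1
        simp only [hεdef] at this; linarith
    -- for s < t₀ in [0,1], the disc omits z, hence min modulus bound
    have homit : ∀ s ∈ Ico (0:ℝ) t₀, 1 - ε - ‖z‖ ≤ ‖φ s w₀ - z‖ := by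
      intro s hs
      have hsI : s ∈ Icc (0:ℝ) 1 := ⟨hs.1, le_trans hs.2.le ht₀I.2⟩
      have hsne : ∀ w ∈ closedBall (0:ℂ) 1, φ s w ≠ z := by
        intro w hw hwz
        have hsT : s ∈ T := ⟨(s, w), ⟨⟨hsI, hw⟩, hwz⟩, rfl⟩
        exact absurd (hlb hsT) (not_le.2 hs.2)
      exact min_mod (hdisc s hsI) (hbdy s hsI) hm hsne w₀ hw₀
    -- continuity of s ↦ φ s w₀ on Icc 0 1
    have hf : ContinuousOn (fun s => φ s w₀) (Icc (0:ℝ) 1) := by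
      have : ContinuousOn (fun s : ℝ => ψ (s, w₀)) (Icc (0:ℝ) 1) := by
        apply hcont.comp (Continuous.continuousOn (by continuity))
        exact fun s hs => ⟨hs, hw₀⟩
      exact this
    -- take the limit s → t₀ from the left
    have hne : (𝓝[Ico (0:ℝ) t₀] t₀).NeBot := by
      rw [← mem_closure_iff_nhdsWithin_neBot, closure_Ico (ne_of_lt ht₀pos)]
      exact ⟨ht₀pos.le, le_refl _⟩
    have htend : Tendsto (fun s => φ s w₀) (𝓝[Ico (0:ℝ) t₀] t₀) (𝓝 (φ t₀ w₀)) := by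
      apply (hf.continuousWithinAt ht₀I).mono_left
      apply nhdsWithin_mono
      intro s hs
      exact ⟨hs.1, le_trans hs.2.le ht₀I.2⟩
    have hlim : 1 - ε - ‖z‖ ≤ ‖φ t₀ w₀ - z‖ := by
      have ht : Tendsto (fun s => ‖φ s w₀ - z‖) (𝓝[Ico (0:ℝ) t₀] t₀) (𝓝 ‖φ t₀ w₀ - z‖) :=
        (htend.sub_const z).norm
      exact ge_of_tendsto ht (eventually_of_mem self_mem_nhdsWithin homit)
    rw [hψz', sub_self, norm_zero] at hlim
    linarith
  · intro z hz ε hε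
    refine ⟨fun _ _ => z, ?_, ?_, ?_, rfl, ?_⟩
    · exact continuousOn_const
    · exact fun t _ => ⟨continuousOn_const, differentiableOn_const z⟩
    · rintro t _ x ⟨w, _, rfl⟩
      exact self_subset_thickening hε _ hz
    · rintro x ⟨w, _, rfl⟩
      exact self_subset_thickening hε _ hz
end
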